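/- Let Ω ⊆ ℝⁿ be closed and convex, f : ℝⁿ → ℝ be C¹, and h : Ω × Ω → ℝ be convex and C¹ in its first argument with a unique minimizer of h(·,z) over Ω for every z ∈ Ω, satisfying ∇₁h(x,x)ᵀ(y−x) = ∇f(x)ᵀ(y−x) for all x,y ∈ Ω. Define p(x) = argmin_{z∈Ω} h(z,x). Then a point x ∈ Ω is stationary for min_{x∈Ω} f(x) (i.e., ∇f(x)ᵀ(y − x) ≥ 0 for all y ∈ Ω) if and only if p(x) = x. -/

import Mathlib

open scoped RealInnerProductSpace

theorem statement2 {n : ℕ} (Ω : Set (EuclideanSpace ℝ (Fin n)))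
    (hΩc : IsClosed Ω) (hΩconv : Convex ℝ Ω) (hΩne : Ω.Nonempty)
    (f : EuclideanSpace ℝ (Fin n) → ℝ) (hf : ContDiff ℝ 1 f)
    (h : EuclideanSpace ℝ (Fin n) → EuclideanSpace ℝ (Fin n) → ℝ)
    (hsmooth : ∀ z ∈ Ω, ContDiff ℝ 1 (fun u => h u z))
    (hconv : ∀ z ∈ Ω, ∀ x ∈ Ω, ∀ y ∈ Ω,
      h x z + ⟪gradient (fun u => h u z) x, y - x⟫ ≤ h y z)
    (hgrad : ∀ x ∈ Ω, ∀ y ∈ Ω,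
      ⟪gradient (fun u => h u x) x, y - x⟫ = ⟪gradient f x, y - x⟫)
    (p : EuclideanSpace ℝ (Fin n) → EuclideanSpace ℝ (Fin n))
    (hp : ∀ z ∈ Ω, p z ∈ Ω ∧ (∀ u ∈ Ω, h (p z) z ≤ h u z) ∧
      (∀ w ∈ Ω, (∀ u ∈ Ω, h w z ≤ h u z) → w = p z))
    (x : EuclideanSpace ℝ (Fin n)) (hx : x ∈ Ω) :
    (∀ y ∈ Ω, 0 ≤ ⟪gradient f x, y - x⟫) ↔ p x = x := by
  obtain ⟨hpx, hpmin, hpuniq⟩ := hp x hx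
  constructor
  · -- stationary → p x = x
    intro hstat
    refine (hpuniq x hx ?_).symm
    intro u hu
    have h1 := hconv x hx x hx u hu
    have h2 : (0:ℝ) ≤ ⟪gradient (fun v => h v x) x, u - x⟫ := by
      rw [hgrad x hx u hu]; exact hstat u hu
    linarith
  · -- p x = x → stationary
    intro hpe y hy
    have hmin : ∀ u ∈ Ω, h x x ≤ h u x := by
      intro u hu; have := hpmin u hu; rwa [hpe] at this
    set g : EuclideanSpace ℝ (Fin n) → EuclideanSpace ℝ (Fin n) :=
      fun u => gradient (fun v => h v x) u with hg
    have hgcont : Continuous g := by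
      have hfd : Continuous (fun u => fderiv ℝ (fun v => h v x) u) :=
        (hsmooth x hx).continuous_fderiv one_ne_zero
      exact (InnerProductSpace.toDual ℝ (EuclideanSpace ℝ (Fin n))).symm.continuous.comp hfd
    set F : ℝ → ℝ := fun t => ⟪g (x + t • (y - x)), y - x⟫ with hF
    have hcurve : Continuous (fun t : ℝ => x + t • (y - x)) :=
      continuous_const.add (continuous_id.smul continuous_const)
    have hFcont : Continuous F := (hgcont.comp hcurve).inner continuous_const
    have hmem : ∀ t : ℝ, t ∈ Set.Icc (0:ℝ) 1 → x + t • (y - x) ∈ Ω := by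
      intro t ht
      have : x + t • (y - x) = (1 - t) • x + t • y := by module
      rw [this]
      exact hΩconv hx hy (by linarith [ht.2]) ht.1 (by ring)
    have hFpos : ∀ t : ℝ, t ∈ Set.Ioc (0:ℝ) 1 → 0 ≤ F t := by
      intro t ht
      set xt := x + t • (y - x) with hxt
      have hxtΩ : xt ∈ Ω := hmem t ⟨le_of_lt ht.1, ht.2⟩
      have h1 := hconv x hx xt hxtΩ x hx
      have h2 := hmin xt hxtΩ
      have h3 : ⟪g xt, x - xt⟫ ≤ 0 := by
        simp only [hg] at *; linarith
      have h4 : x - xt = (-t) • (y - x) := by rw [hxt]; module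
      rw [h4, real_inner_smul_right] at h3
      have := nonneg_of_neg_nonpos (by linarith : -(t * F t) ≤ 0)
      exact nonneg_of_mul_nonneg_right this ht.1
    have htend : Filter.Tendsto F (nhdsWithin 0 (Set.Ioi 0)) (nhds (F 0)) :=
      (hFcont.tendsto 0).mono_left nhdsWithin_le_nhds
    have hev : ∀ᶠ t in nhdsWithin (0:ℝ) (Set.Ioi 0), 0 ≤ F t := by
      filter_upwards [self_mem_nhdsWithin,
        eventually_nhdsWithin_of_eventually_nhds
          (Filter.tendsto_id.eventually_lt_const (by norm_num : (0:ℝ) < 1))] with t h1 h2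
      exact hFpos t ⟨h1, le_of_lt h2⟩
    have hF0 : 0 ≤ F 0 := ge_of_tendsto htend hev
    have : F 0 = ⟪gradient f x, y - x⟫ := by
      simp only [hF, hg, zero_smul, add_zero]
      exact hgrad x hx y hy
    linarith
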